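/- Fix σ > 0 and a > 0. The function r ↦ TV_a(N(0, σ²), N(r, σ²)) is strictly increasing on (0, ∞). Consequently, for any d ≥ 1 and u₁, u₂ ∈ ℝ^d with ‖u₁ − u₂‖₂ ≤ r, one has TV_a(N(u₁, σ²I_d), N(u₂, σ²I_d)) ≤ TV_a(N(0, σ²), N(r, σ²)). -/

import Mathlib

open MeasureTheory

/-- `TV_a(X, Y) = (1/2) ∫ |f(x) − a·g(x)| dx` for densities `f, g`. -/
noncomputable def TVa {E : Type*} [MeasureSpace E] (a : ℝ) (f g : E → ℝ) : ℝ :=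
  (1 / 2) * ∫ x, |f x - a * g x|

/-- Density of the isotropic Gaussian `N(u, σ²I_d)` on `ℝ^d`. -/
noncomputable def gaussDensity (d : ℕ) (σ : ℝ) (u : EuclideanSpace ℝ (Fin d))
    (x : EuclideanSpace ℝ (Fin d)) : ℝ :=
  (2 * Real.pi * σ ^ 2) ^ (-(d : ℝ) / 2) * Real.exp (-‖x - u‖ ^ 2 / (2 * σ ^ 2))

/-- Density of the one-dimensional Gaussian `N(u, σ²)` on `ℝ`. -/
noncomputable def gauss1 (σ u : ℝ) (x : ℝ) : ℝ :=
  (2 * Real.pi * σ ^ 2) ^ (-(1 : ℝ) / 2) * Real.exp (-(x - u) ^ 2 / (2 * σ ^ 2))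

open Real Set

section Aux

variable {σ a : ℝ}

lemma twopisq_pos (hσ : 0 < σ) : 0 < 2 * Real.pi * σ ^ 2 := by positivity

lemma gauss1_pos (hσ : 0 < σ) (u x : ℝ) : 0 < gauss1 σ u x := by
  unfold gauss1
  positivity

lemma gauss1_cont (σ u : ℝ) : Continuous (gauss1 σ u) := by
  unfold gauss1
  fun_prop

lemma gauss1_integrable (hσ : 0 < σ) (u : ℝ) : Integrable (gauss1 σ u) := by
  have hb : (0:ℝ) < (2 * σ ^ 2)⁻¹ := by positivity
  have h0 : Integrable (fun x : ℝ => Real.exp (-(2 * σ ^ 2)⁻¹ * x ^ 2)) :=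
    integrable_exp_neg_mul_sq hb
  have h1 : Integrable (fun x : ℝ => Real.exp (-(2 * σ ^ 2)⁻¹ * (x - u) ^ 2)) :=
    h0.comp_sub_right u
  have := h1.const_mul ((2 * Real.pi * σ ^ 2) ^ (-(1 : ℝ) / 2))
  refine this.congr (Filter.Eventually.of_forall fun x => ?_)
  unfold gauss1
  ring_nf

lemma gauss1_integral (hσ : 0 < σ) (u : ℝ) : ∫ x, gauss1 σ u x = 1 := by
  have hb : (0:ℝ) < (2 * σ ^ 2)⁻¹ := by positivity
  have h1 : ∫ x, Real.exp (-(2 * σ ^ 2)⁻¹ * x ^ 2) = Real.sqrt (Real.pi / (2 * σ ^ 2)⁻¹) :=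
    integral_gaussian _
  have h2 : ∫ x : ℝ, Real.exp (-(2 * σ ^ 2)⁻¹ * (x - u) ^ 2)
      = Real.sqrt (Real.pi / (2 * σ ^ 2)⁻¹) := by
    rw [← h1]
    exact integral_sub_right_eq_self (fun x => Real.exp (-(2 * σ ^ 2)⁻¹ * x ^ 2)) u
  have h3 : ∫ x, gauss1 σ u x
      = (2 * Real.pi * σ ^ 2) ^ (-(1 : ℝ) / 2) * Real.sqrt (Real.pi / (2 * σ ^ 2)⁻¹) := by
    rw [← h2, ← integral_const_mul]
    congr 1 with x
    unfold gauss1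
    ring_nf
  rw [h3]
  have h4 : Real.pi / (2 * σ ^ 2)⁻¹ = 2 * Real.pi * σ ^ 2 := by field_simp
  rw [h4, Real.sqrt_eq_rpow, ← Real.rpow_add (twopisq_pos hσ)]
  norm_num

/-- the Gaussian CDF (not normalized to the standard one). -/
noncomputable def Psi (σ t : ℝ) : ℝ := ∫ x in Iic t, gauss1 σ 0 x

lemma psi_shift (r c : ℝ) : ∫ x in Iic c, gauss1 σ r x = Psi σ (c - r) := by
  have h := (measurePreserving_add_right volume r).setIntegral_preimage_emb
    (MeasurableEquiv.addRight r).measurableEmbedding (fun x => gauss1 σ 0 (x - r)) (Iic c)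
  unfold Psi
  have hpre : (fun x : ℝ => x + r) ⁻¹' (Iic c) = Iic (c - r) := by
    ext x; simp [le_sub_iff_add_le]
  rw [hpre] at h
  simp only [add_sub_cancel_right] at h
  rw [h]
  congr 1 with x
  simp [gauss1]

lemma hasDerivAt_Psi (hσ : 0 < σ) (t : ℝ) :
    HasDerivAt (Psi σ) (gauss1 σ 0 t) t := by
  have hint : Integrable (gauss1 σ 0) := gauss1_integrable hσ 0
  have heq : ∀ s, Psi σ s = Psi σ 0 + ∫ x in (0:ℝ)..s, gauss1 σ 0 x := by
    intro s
    unfold Psi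
    rw [← intervalIntegral.integral_Iic_sub_Iic hint.integrableOn hint.integrableOn]
    ring
  have hd : HasDerivAt (fun s => Psi σ 0 + ∫ x in (0:ℝ)..s, gauss1 σ 0 x)
      (gauss1 σ 0 t) t := by
    refine (hasDerivAt_const t (Psi σ 0)).add ?_ |>.congr_deriv (by ring)
    exact intervalIntegral.integral_hasDerivAt_right hint.intervalIntegrable
      (gauss1_cont σ 0).stronglyMeasurable.stronglyMeasurableAtFilter
      (gauss1_cont σ 0).continuousAt
  exact hd.congr_of_eventuallyEq (Filter.Eventually.of_forall heq) |>.congr_deriv rfl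

/-- crossing point of the two scaled Gaussian densities. -/
noncomputable def cc (σ a r : ℝ) : ℝ := r / 2 - σ ^ 2 * Real.log a / r

lemma key_identity (hσ : 0 < σ) (ha : 0 < a) {r : ℝ} (hr : 0 < r) :
    a * gauss1 σ 0 (cc σ a r - r) = gauss1 σ 0 (cc σ a r) := by
  unfold gauss1
  rw [show a * ((2 * Real.pi * σ ^ 2) ^ (-(1:ℝ)/2)
        * Real.exp (-(cc σ a r - r - 0) ^ 2 / (2 * σ ^ 2)))
      = (2 * Real.pi * σ ^ 2) ^ (-(1:ℝ)/2)
        * (Real.exp (Real.log a) * Real.exp (-(cc σ a r - r - 0) ^ 2 / (2 * σ ^ 2))) by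
    rw [Real.exp_log ha]; ring]
  rw [← Real.exp_add]
  congr 1
  unfold cc
  field_simp
  ring

lemma sign_le (hσ : 0 < σ) (ha : 0 < a) {r : ℝ} (hr : 0 < r) {x : ℝ}
    (hx : x ≤ cc σ a r) : a * gauss1 σ r x ≤ gauss1 σ 0 x := by
  unfold gauss1
  rw [show a * ((2 * Real.pi * σ ^ 2) ^ (-(1:ℝ)/2) * Real.exp (-(x - r) ^ 2 / (2 * σ ^ 2)))
      = (2 * Real.pi * σ ^ 2) ^ (-(1:ℝ)/2) * Real.exp (Real.log a + -(x - r) ^ 2 / (2 * σ ^ 2)) by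
    rw [Real.exp_add, Real.exp_log ha]; ring]
  have hC : (0:ℝ) < (2 * Real.pi * σ ^ 2) ^ (-(1:ℝ)/2) := by positivity
  refine mul_le_mul_of_nonneg_left ?_ hC.le
  rw [Real.exp_le_exp]
  have hkey : -(x - 0) ^ 2 / (2 * σ ^ 2) - (Real.log a + -(x - r) ^ 2 / (2 * σ ^ 2))
      = r * (cc σ a r - x) / σ ^ 2 := by
    unfold cc; field_simp; ring
  have h2 : 0 ≤ r * (cc σ a r - x) / σ ^ 2 :=
    div_nonneg (mul_nonneg hr.le (sub_nonneg.2 hx)) (sq_nonneg σ)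
  linarith [hkey]

lemma sign_ge (hσ : 0 < σ) (ha : 0 < a) {r : ℝ} (hr : 0 < r) {x : ℝ}
    (hx : cc σ a r ≤ x) : gauss1 σ 0 x ≤ a * gauss1 σ r x := by
  unfold gauss1
  rw [show a * ((2 * Real.pi * σ ^ 2) ^ (-(1:ℝ)/2) * Real.exp (-(x - r) ^ 2 / (2 * σ ^ 2)))
      = (2 * Real.pi * σ ^ 2) ^ (-(1:ℝ)/2) * Real.exp (Real.log a + -(x - r) ^ 2 / (2 * σ ^ 2)) by
    rw [Real.exp_add, Real.exp_log ha]; ring]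
  have hC : (0:ℝ) < (2 * Real.pi * σ ^ 2) ^ (-(1:ℝ)/2) := by positivity
  refine mul_le_mul_of_nonneg_left ?_ hC.le
  rw [Real.exp_le_exp]
  have hkey : -(x - 0) ^ 2 / (2 * σ ^ 2) - (Real.log a + -(x - r) ^ 2 / (2 * σ ^ 2))
      = r * (cc σ a r - x) / σ ^ 2 := by
    unfold cc; field_simp; ring
  have h2 : r * (cc σ a r - x) / σ ^ 2 ≤ 0 := by
    apply div_nonpos_of_nonpos_of_nonneg _ (sq_nonneg σ)
    exact mul_nonpos_of_nonneg_of_nonpos hr.le (sub_nonpos.2 hx)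
  linarith [hkey]

lemma tva_formula (hσ : 0 < σ) (ha : 0 < a) {r : ℝ} (hr : 0 < r) :
    TVa a (gauss1 σ 0) (gauss1 σ r)
      = Psi σ (cc σ a r) - a * Psi σ (cc σ a r - r) + (a - 1) / 2 := by
  set c := cc σ a r with hc
  have hf : Integrable (gauss1 σ 0) := gauss1_integrable hσ 0
  have hg : Integrable (gauss1 σ r) := gauss1_integrable hσ r
  have hh : Integrable (fun x => gauss1 σ 0 x - a * gauss1 σ r x) := hf.sub (hg.const_mul a)
  have habs : Integrable (fun x => |gauss1 σ 0 x - a * gauss1 σ r x|) := hh.abs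
  have hsplit : (∫ x, |gauss1 σ 0 x - a * gauss1 σ r x|)
      = (∫ x in Iic c, |gauss1 σ 0 x - a * gauss1 σ r x|)
        + ∫ x in Ioi c, |gauss1 σ 0 x - a * gauss1 σ r x| := by
    rw [← compl_Iic]
    exact (integral_add_compl measurableSet_Iic habs).symm
  have h1 : (∫ x in Iic c, |gauss1 σ 0 x - a * gauss1 σ r x|)
      = ∫ x in Iic c, (gauss1 σ 0 x - a * gauss1 σ r x) := by
    refine setIntegral_congr_fun measurableSet_Iic fun x hx => ?_
    exact abs_of_nonneg (sub_nonneg.2 (sign_le hσ ha hr hx))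
  have h2 : (∫ x in Ioi c, |gauss1 σ 0 x - a * gauss1 σ r x|)
      = ∫ x in Ioi c, (a * gauss1 σ r x - gauss1 σ 0 x) := by
    refine setIntegral_congr_fun measurableSet_Ioi fun x hx => ?_
    rw [abs_sub_comm]
    exact abs_of_nonneg (sub_nonneg.2 (sign_ge hσ ha hr (le_of_lt hx)))
  have hIic : ∀ u, ∫ x in Iic c, gauss1 σ u x = Psi σ (c - u) := fun u => psi_shift u c
  have hIic0 : ∫ x in Iic c, gauss1 σ 0 x = Psi σ c := by
    have := hIic 0; simpa using this
  have hIoi : ∀ u, (∫ x in Ioi c, gauss1 σ u x) = 1 - ∫ x in Iic c, gauss1 σ u x := by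
    intro u
    have := integral_add_compl (measurableSet_Iic (a := c)) (gauss1_integrable hσ u)
    rw [compl_Iic] at this
    rw [← gauss1_integral hσ u, ← this]; ring
  have e1 : (∫ x in Iic c, (gauss1 σ 0 x - a * gauss1 σ r x))
      = Psi σ c - a * Psi σ (c - r) := by
    rw [integral_sub hf.integrableOn ((hg.const_mul a).integrableOn), integral_const_mul,
      hIic0, hIic r]
  have e2 : (∫ x in Ioi c, (a * gauss1 σ r x - gauss1 σ 0 x))
      = a * (1 - Psi σ (c - r)) - (1 - Psi σ c) := by
    rw [integral_sub ((hg.const_mul a).integrableOn) hf.integrableOn, integral_const_mul,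
      hIoi r, hIoi 0, hIic r, hIic0]
  unfold TVa
  rw [hsplit, h1, h2, e1, e2]
  ring

lemma hasDerivAt_cc {r : ℝ} (hr : 0 < r) :
    HasDerivAt (cc σ a) (1 / 2 + σ ^ 2 * Real.log a / r ^ 2) r := by
  have h1 : HasDerivAt (fun r : ℝ => r / 2) (1 / 2) r := by
    simpa using (hasDerivAt_id r).div_const 2
  have h2 : HasDerivAt (fun r : ℝ => σ ^ 2 * Real.log a * r⁻¹)
      (σ ^ 2 * Real.log a * (-(r ^ 2)⁻¹)) r := (hasDerivAt_inv hr.ne').const_mul _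
  have := h1.sub h2
  have heq : (fun x : ℝ => x / 2 - σ ^ 2 * Real.log a * x⁻¹) = cc σ a := by
    funext x; unfold cc; ring
  rw [show ((fun r : ℝ => r / 2) - fun r => σ ^ 2 * Real.log a * r⁻¹) = cc σ a from heq] at this
  refine this.congr_deriv ?_
  ring

/-- The CDF-form expression for `TVa`. -/
noncomputable def Gfun (σ a : ℝ) : ℝ → ℝ :=
  fun r => Psi σ (cc σ a r) - a * Psi σ (cc σ a r - r) + (a - 1) / 2

lemma hasDerivAt_Gfun (hσ : 0 < σ) (ha : 0 < a) {r : ℝ} (hr : 0 < r) :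
    HasDerivAt (Gfun σ a) (gauss1 σ 0 (cc σ a r)) r := by
  set c' : ℝ := 1 / 2 + σ ^ 2 * Real.log a / r ^ 2 with hc'
  have hcder : HasDerivAt (cc σ a) c' r := hasDerivAt_cc hr
  have h1 : HasDerivAt (fun r => Psi σ (cc σ a r)) (gauss1 σ 0 (cc σ a r) * c') r :=
    (hasDerivAt_Psi hσ (cc σ a r)).comp r hcder
  have h2 : HasDerivAt (fun r => cc σ a r - r) (c' - 1) r := hcder.sub (hasDerivAt_id r)
  have h3' : HasDerivAt (fun s => Psi σ (cc σ a s - s))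
      (gauss1 σ 0 (cc σ a r - r) * (c' - 1)) r :=
    HasDerivAt.comp (h := fun s => cc σ a s - s) (h₂ := Psi σ) r
      (hasDerivAt_Psi hσ (cc σ a r - r)) h2
  have h4 := (h1.sub (h3'.const_mul a)).add_const ((a - 1) / 2)
  have hkey := key_identity hσ ha hr
  refine h4.congr_deriv ?_
  rw [show a * (gauss1 σ 0 (cc σ a r - r) * (c' - 1))
      = (a * gauss1 σ 0 (cc σ a r - r)) * (c' - 1) by ring, hkey]
  ring

lemma strictMono_part (hσ : 0 < σ) (ha : 0 < a) :
    StrictMonoOn (fun r : ℝ => TVa a (gauss1 σ 0) (gauss1 σ r)) (Set.Ioi 0) := by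
  have hG : StrictMonoOn (Gfun σ a) (Set.Ioi 0) := by
    refine strictMonoOn_of_deriv_pos (convex_Ioi 0) ?_ ?_
    · intro r hr
      exact ((hasDerivAt_Gfun hσ ha hr).continuousAt).continuousWithinAt
    · intro r hr
      rw [interior_Ioi] at hr
      rw [(hasDerivAt_Gfun hσ ha hr).deriv]
      exact gauss1_pos hσ 0 _
  intro x hx y hy hxy
  have ex := tva_formula hσ ha hx
  have ey := tva_formula hσ ha hy
  simp only [ex, ey]
  exact hG hx hy hxy

lemma tva_self (hσ : 0 < σ) : TVa a (gauss1 σ 0) (gauss1 σ 0) = |1 - a| / 2 := by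
  unfold TVa
  have h : ∀ x : ℝ, |gauss1 σ 0 x - a * gauss1 σ 0 x| = |1 - a| * gauss1 σ 0 x := by
    intro x
    rw [show gauss1 σ 0 x - a * gauss1 σ 0 x = (1 - a) * gauss1 σ 0 x by ring, abs_mul,
      abs_of_nonneg (gauss1_pos hσ 0 x).le]
  simp_rw [h]
  rw [integral_const_mul, gauss1_integral hσ 0]
  ring

lemma tva_lower (hσ : 0 < σ) (ha : 0 < a) (r : ℝ) :
    |1 - a| / 2 ≤ TVa a (gauss1 σ 0) (gauss1 σ r) := by
  have hf : Integrable (gauss1 σ 0) := gauss1_integrable hσ 0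
  have hg : Integrable (gauss1 σ r) := gauss1_integrable hσ r
  have h1 : (∫ x, (gauss1 σ 0 x - a * gauss1 σ r x)) = 1 - a := by
    rw [integral_sub hf (hg.const_mul a), integral_const_mul, gauss1_integral hσ 0,
      gauss1_integral hσ r]
    ring
  have h2 : |∫ x, (gauss1 σ 0 x - a * gauss1 σ r x)|
      ≤ ∫ x, |gauss1 σ 0 x - a * gauss1 σ r x| := by
    simpa [Real.norm_eq_abs] using
      norm_integral_le_integral_norm (fun x => gauss1 σ 0 x - a * gauss1 σ r x)
  rw [h1] at h2
  unfold TVa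
  linarith

end Aux

section Dim

lemma gaussDensity_norm (d : ℕ) (σ : ℝ) (u₁ u₂ : EuclideanSpace ℝ (Fin d))
    (x₁ x₂ : EuclideanSpace ℝ (Fin d)) (h : ‖x₁ - u₁‖ = ‖x₂ - u₂‖) :
    gaussDensity d σ u₁ x₁ = gaussDensity d σ u₂ x₂ := by
  unfold gaussDensity; rw [h]

lemma euclid_norm_sq {d : ℕ} (z : EuclideanSpace ℝ (Fin d)) :
    ‖z‖ ^ 2 = ∑ i, (z i) ^ 2 := by
  rw [EuclideanSpace.norm_eq, Real.sq_sqrt (by positivity)]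
  simp [Real.norm_eq_abs, sq_abs]

lemma gaussDensity_prod {d : ℕ} {σ : ℝ} (hσ : 0 < σ) (u z : EuclideanSpace ℝ (Fin d)) :
    gaussDensity d σ u z = ∏ i, gauss1 σ (u i) (z i) := by
  have hpos : (0:ℝ) < 2 * Real.pi * σ ^ 2 := by positivity
  unfold gaussDensity gauss1
  rw [Finset.prod_mul_distrib, Finset.prod_const, ← Real.exp_sum]
  have h1 : ((2 * Real.pi * σ ^ 2) ^ (-(1:ℝ) / 2)) ^ (Finset.univ : Finset (Fin d)).card
      = (2 * Real.pi * σ ^ 2) ^ (-(d:ℝ) / 2) := by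
    rw [← Real.rpow_natCast ((2 * Real.pi * σ ^ 2) ^ (-(1:ℝ) / 2)) _, ← Real.rpow_mul hpos.le]
    simp only [Finset.card_univ, Fintype.card_fin]
    ring_nf
  rw [h1]
  congr 1
  rw [euclid_norm_sq (z - u)]
  have : ∀ i, (z - u) i = z i - u i := fun i => rfl
  simp_rw [this, ← Finset.sum_div]
  rw [← Finset.sum_neg_distrib]

lemma tva_dim {σ a : ℝ} (hσ : 0 < σ) (ha : 0 < a) {d : ℕ} (hd : 1 ≤ d)
    (u₁ u₂ : EuclideanSpace ℝ (Fin d)) :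
    TVa a (gaussDensity d σ u₁) (gaussDensity d σ u₂)
      = TVa a (gauss1 σ 0) (gauss1 σ ‖u₁ - u₂‖) := by
  have hd0 : 0 < d := hd
  set δ : ℝ := ‖u₁ - u₂‖ with hδdef
  have hδ0 : 0 ≤ δ := norm_nonneg _
  set v : EuclideanSpace ℝ (Fin d) := u₂ - u₁ with hv
  have hvnorm : ‖v‖ = δ := norm_sub_rev u₂ u₁
  set i0 : Fin d := ⟨0, hd0⟩ with hi0
  set w : EuclideanSpace ℝ (Fin d) := EuclideanSpace.single i0 δ with hw
  have hwnorm : ‖w‖ = δ := by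
    rw [hw, EuclideanSpace.norm_single, Real.norm_eq_abs, abs_of_nonneg hδ0]
  have hwi : ∀ i, w i = if i = i0 then δ else 0 := by
    intro i; rw [hw, EuclideanSpace.single_apply]
  -- step A: translation
  have hA : (∫ x, |gaussDensity d σ u₁ x - a * gaussDensity d σ u₂ x|)
      = ∫ x, |gaussDensity d σ 0 x - a * gaussDensity d σ v x| := by
    rw [← (measurePreserving_add_right volume u₁).integral_comp
      (Homeomorph.addRight u₁).measurableEmbedding
      (fun x => |gaussDensity d σ u₁ x - a * gaussDensity d σ u₂ x|)]
    congr 1 with x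
    rw [gaussDensity_norm d σ u₁ 0 (x + u₁) x (by rw [sub_zero, add_sub_cancel_right]),
      gaussDensity_norm d σ u₂ v (x + u₁) x (by rw [hv]; congr 1; abel)]
  -- step B: rotation
  have hvw : ‖v‖ = ‖w‖ := by rw [hvnorm, hwnorm]
  set e : EuclideanSpace ℝ (Fin d) ≃ₗᵢ[ℝ] EuclideanSpace ℝ (Fin d) :=
    Submodule.reflection (ℝ ∙ (v - w))ᗮ with he
  have hev : e v = w := Submodule.reflection_sub hvw
  have hew : e w = v := by rw [← hev, he]; exact Submodule.reflection_reflection _ v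
  have hB : (∫ x, |gaussDensity d σ 0 x - a * gaussDensity d σ v x|)
      = ∫ x, |gaussDensity d σ 0 x - a * gaussDensity d σ w x| := by
    rw [← e.measurePreserving.integral_comp e.toHomeomorph.measurableEmbedding
      (fun x => |gaussDensity d σ 0 x - a * gaussDensity d σ v x|)]
    congr 1 with x
    rw [gaussDensity_norm d σ 0 0 (e x) x (by rw [sub_zero, sub_zero]; exact e.norm_map x),
      gaussDensity_norm d σ v w (e x) x (by rw [← hew, ← e.map_sub]; exact e.norm_map _)]
  -- step C: coordinates and product structure
  set F : Fin d → ℝ → ℝ :=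
    fun i t => if i = i0 then |gauss1 σ 0 t - a * gauss1 σ δ t| else gauss1 σ 0 t with hF
  have hC : (∫ x, |gaussDensity d σ 0 x - a * gaussDensity d σ w x|)
      = ∫ y : Fin d → ℝ, ∏ i, F i (y i) := by
    rw [← ((EuclideanSpace.volume_preserving_symm_measurableEquiv_toLp (ι := Fin d)).symm).integral_comp'
      (fun x => |gaussDensity d σ 0 x - a * gaussDensity d σ w x|)]
    congr 1 with y
    set z : EuclideanSpace ℝ (Fin d) := (MeasurableEquiv.toLp 2 (Fin d → ℝ)).symm.symm y with hz
    have hzi : ∀ i, z i = y i := fun i => rfl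
    rw [gaussDensity_prod hσ 0 z, gaussDensity_prod hσ w z]
    have hp0 : ∀ i, gauss1 σ ((0 : EuclideanSpace ℝ (Fin d)) i) (z i) = gauss1 σ 0 (y i) := by
      intro i; rw [hzi]; rfl
    have hpw : ∀ i : Fin d, i ≠ i0 → gauss1 σ (w i) (z i) = gauss1 σ 0 (y i) := by
      intro i hi; rw [hzi, hwi, if_neg hi]
    have hpw0 : gauss1 σ (w i0) (z i0) = gauss1 σ δ (y i0) := by
      rw [hzi, hwi, if_pos rfl]
    simp_rw [hp0]
    rw [← Finset.mul_prod_erase Finset.univ (fun i => gauss1 σ (w i) (z i)) (Finset.mem_univ i0),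
      ← Finset.mul_prod_erase Finset.univ (fun i => gauss1 σ 0 (y i)) (Finset.mem_univ i0),
      ← Finset.mul_prod_erase Finset.univ (fun i => F i (y i)) (Finset.mem_univ i0)]
    have hprod : ∀ i ∈ Finset.univ.erase i0, gauss1 σ (w i) (z i) = gauss1 σ 0 (y i) := by
      intro i hi; exact hpw i (Finset.mem_erase.1 hi).1
    rw [Finset.prod_congr rfl hprod, hpw0]
    have hFi0 : F i0 (y i0) = |gauss1 σ 0 (y i0) - a * gauss1 σ δ (y i0)| := by
      rw [hF]; simp
    have hFrest : ∀ i ∈ Finset.univ.erase i0, F i (y i) = gauss1 σ 0 (y i) := by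
      intro i hi; rw [hF]; simp [(Finset.mem_erase.1 hi).1]
    rw [Finset.prod_congr rfl hFrest, hFi0]
    have hP : (0:ℝ) ≤ ∏ i ∈ Finset.univ.erase i0, gauss1 σ 0 (y i) :=
      Finset.prod_nonneg fun i _ => (gauss1_pos hσ 0 (y i)).le
    rw [show gauss1 σ 0 (y i0) * (∏ i ∈ Finset.univ.erase i0, gauss1 σ 0 (y i))
        - a * (gauss1 σ δ (y i0) * ∏ i ∈ Finset.univ.erase i0, gauss1 σ 0 (y i))
        = (gauss1 σ 0 (y i0) - a * gauss1 σ δ (y i0))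
          * ∏ i ∈ Finset.univ.erase i0, gauss1 σ 0 (y i) by ring,
      abs_mul, abs_of_nonneg hP]
  -- step D: Fubini
  have hD : (∫ y : Fin d → ℝ, ∏ i, F i (y i))
      = ∫ t, |gauss1 σ 0 t - a * gauss1 σ δ t| := by
    rw [volume_pi, MeasureTheory.integral_fintype_prod_eq_prod (ι := Fin d) F]
    rw [← Finset.mul_prod_erase Finset.univ (fun i => ∫ t, F i t) (Finset.mem_univ i0)]
    have h1 : (∫ t, F i0 t) = ∫ t, |gauss1 σ 0 t - a * gauss1 σ δ t| := by
      simp [hF]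
    have h2 : ∀ i ∈ Finset.univ.erase i0, (∫ t, F i t) = 1 := by
      intro i hi
      have : (fun t => F i t) = gauss1 σ 0 := by
        funext t; rw [hF]; simp [(Finset.mem_erase.1 hi).1]
      rw [this, gauss1_integral hσ 0]
    rw [Finset.prod_congr rfl h2, h1]
    simp
  unfold TVa
  rw [hA, hB, hC, hD]

end Dim

/-- `r ↦ TV_a(N(0, σ²), N(r, σ²))` is strictly increasing on `(0, ∞)`; consequently
for any `d ≥ 1` and means at Euclidean distance at most `r`, the `TV_a` divergence between
the `d`-dimensional isotropic Gaussians is at most `TV_a(N(0, σ²), N(r, σ²))`. -/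
theorem tva_gauss_strictMono_and_le (σ a : ℝ) (hσ : 0 < σ) (ha : 0 < a) :
    StrictMonoOn (fun r : ℝ => TVa a (gauss1 σ 0) (gauss1 σ r)) (Set.Ioi 0) ∧
    ∀ (d : ℕ), 1 ≤ d → ∀ (r : ℝ) (u₁ u₂ : EuclideanSpace ℝ (Fin d)), ‖u₁ - u₂‖ ≤ r →
      TVa a (gaussDensity d σ u₁) (gaussDensity d σ u₂)
        ≤ TVa a (gauss1 σ 0) (gauss1 σ r) := by
  refine ⟨strictMono_part hσ ha, ?_⟩
  intro d hd r u₁ u₂ hle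
  rw [tva_dim hσ ha hd u₁ u₂]
  set δ : ℝ := ‖u₁ - u₂‖ with hδ
  have hδ0 : 0 ≤ δ := norm_nonneg _
  rcases eq_or_lt_of_le hle with h | h
  · rw [h]
  · rcases hδ0.eq_or_lt with h0 | h0
    · rw [← h0, tva_self hσ]
      exact tva_lower hσ ha r
    · exact (strictMono_part hσ ha (Set.mem_Ioi.2 h0) (Set.mem_Ioi.2 (h0.trans h)) h).le
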